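/- arXiv:1501.04826 — 3 statements merged into one kernel-verified Lean document; each statement's English description precedes it below -/
import Mathlib

section
/- Let γ be a confidence parameter with 0 < γ < 1, let X₀ → Y₀, X₁ → Y₁, …, X_k → Y_k be partial implications over [n] with k ≥ 1, assume that the entailment X₁ → Y₁, …, X_k → Y_k ⊨_γ X₀ → Y₀ holds properly, and let λ = (λ₁,…,λ_k) be a vector of nonnegative reals such that ∑_{i=1}^{k} λ_i · w_Z(X_i → Y_i) ≤ w_Z(X₀ → Y₀) for every transaction Z ⊆ [n]. Then λ_i > 0 for every i ∈ [k]. -/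
open Finset

/-- Number of transactions in the dataset `D` that cover `X`, counted with multiplicity. -/
def cntD {n : ℕ} (D : Multiset (Finset (Fin n))) (X : Finset (Fin n)) : ℕ :=
  (D.filter (fun Z => X ⊆ Z)).card

/-- `D ⊨_γ X → Y` : either no transaction covers `X`, or the confidence of `X → Y` is ≥ γ. -/
def satPI {n : ℕ} (γ : ℝ) (D : Multiset (Finset (Fin n))) (X Y : Finset (Fin n)) : Prop :=
  cntD D X = 0 ∨ γ * (cntD D X : ℝ) ≤ (cntD D (X ∪ Y) : ℝ)

/-- Entailment at confidence threshold γ from the premises indexed by `L`. -/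
def entailsFrom {n k : ℕ} (γ : ℝ) (P : Fin k → Finset (Fin n) × Finset (Fin n))
    (L : Finset (Fin k)) (X₀ Y₀ : Finset (Fin n)) : Prop :=
  ∀ D : Multiset (Finset (Fin n)),
    (∀ i ∈ L, satPI γ D (P i).1 (P i).2) → satPI γ D X₀ Y₀

/-- Proper entailment from the premises indexed by `L`: the entailment holds,
and it fails from every proper subset of the premises. -/
def properFrom {n k : ℕ} (γ : ℝ) (P : Fin k → Finset (Fin n) × Finset (Fin n))
    (L : Finset (Fin k)) (X₀ Y₀ : Finset (Fin n)) : Prop :=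
  entailsFrom γ P L X₀ Y₀ ∧ ∀ L' ⊂ L, ¬ entailsFrom γ P L' X₀ Y₀

/-- The weight `w_Z(X → Y)`: `1-γ` if `Z` witnesses, `-γ` if `Z` violates, `0` otherwise. -/
noncomputable def wt {n : ℕ} (γ : ℝ) (Z X Y : Finset (Fin n)) : ℝ :=
  if X ∪ Y ⊆ Z then 1 - γ else if X ⊆ Z then -γ else 0

/-- The premises indexed by `L` enforce homogeneity. -/
def homogFrom {n k : ℕ} (P : Fin k → Finset (Fin n) × Finset (Fin n))
    (L : Finset (Fin k)) : Prop :=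
  ∀ Z : Finset (Fin n),
    (∀ i ∈ L, ¬ (P i).1 ⊆ Z ∨ (P i).1 ∪ (P i).2 ⊆ Z) →
    ((∀ i ∈ L, ¬ (P i).1 ⊆ Z) ∨ (∀ i ∈ L, (P i).1 ∪ (P i).2 ⊆ Z))

/-- The critical threshold `γ*({Xᵢ → Yᵢ : i ∈ L}, X)`. -/
noncomputable def gammaStar {n k : ℕ} (P : Fin k → Finset (Fin n) × Finset (Fin n))
    (L : Finset (Fin k)) (X : Finset (Fin n)) : ℝ :=
  sInf { r : ℝ | ∃ lam : Fin k → ℝ, (∀ i ∈ L, 0 ≤ lam i) ∧ (∑ i ∈ L, lam i) = 1 ∧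
    r = (Finset.univ.filter (fun Z : Finset (Fin n) => ¬ X ⊆ Z)).fold max 0
          (fun Z => (∑ i ∈ L.filter (fun i => (P i).1 ∪ (P i).2 ⊆ Z), lam i) /
                    (∑ i ∈ L.filter (fun i => (P i).1 ⊆ Z), lam i)) }

lemma wt_eq {n : ℕ} (γ : ℝ) (Z X Y : Finset (Fin n)) :
    wt γ Z X Y = (if X ∪ Y ⊆ Z then (1:ℝ) else 0) - γ * (if X ⊆ Z then (1:ℝ) else 0) := by
  unfold wt
  by_cases h1 : X ∪ Y ⊆ Z
  · have h2 : X ⊆ Z := (Finset.subset_union_left).trans h1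
    simp [h1, h2]
  · by_cases h2 : X ⊆ Z <;> simp [h1, h2]

lemma cnt_eq {n : ℕ} (D : Multiset (Finset (Fin n))) (X : Finset (Fin n)) :
    (D.map fun Z => if X ⊆ Z then (1:ℝ) else 0).sum = (cntD D X : ℝ) := by
  induction D using Multiset.induction with
  | empty => simp [cntD]
  | cons a s ih =>
    simp only [Multiset.map_cons, Multiset.sum_cons, cntD, Multiset.filter_cons] at *
    by_cases h : X ⊆ a <;> simp [h, ih] <;> push_cast <;> ring

lemma wsum_eq {n : ℕ} (γ : ℝ) (D : Multiset (Finset (Fin n))) (X Y : Finset (Fin n)) :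
    (D.map fun Z => wt γ Z X Y).sum = (cntD D (X ∪ Y) : ℝ) - γ * (cntD D X : ℝ) := by
  induction D using Multiset.induction with
  | empty => simp [cntD]
  | cons a s ih =>
    simp only [Multiset.map_cons, Multiset.sum_cons] at *
    rw [ih, wt_eq]
    have h1 : ((cntD (a ::ₘ s) (X ∪ Y) : ℝ)) =
        (if X ∪ Y ⊆ a then (1:ℝ) else 0) + (cntD s (X ∪ Y) : ℝ) := by
      simp only [cntD, Multiset.filter_cons]
      by_cases h : X ∪ Y ⊆ a <;> simp [h] <;> push_cast <;> ring
    have h2 : ((cntD (a ::ₘ s) X : ℝ)) =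
        (if X ⊆ a then (1:ℝ) else 0) + (cntD s X : ℝ) := by
      simp only [cntD, Multiset.filter_cons]
      by_cases h : X ⊆ a <;> simp [h] <;> push_cast <;> ring
    rw [h1, h2]; ring

lemma cnt_mono {n : ℕ} (D : Multiset (Finset (Fin n))) (X Y : Finset (Fin n)) :
    cntD D (X ∪ Y) ≤ cntD D X := by
  apply Multiset.card_le_card
  apply Multiset.monotone_filter_right
  intro Z hZ
  exact (Finset.subset_union_left).trans hZ

lemma sat_iff {n : ℕ} (γ : ℝ) (hγ0 : 0 < γ) (D : Multiset (Finset (Fin n)))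
    (X Y : Finset (Fin n)) :
    satPI γ D X Y ↔ 0 ≤ (cntD D (X ∪ Y) : ℝ) - γ * (cntD D X : ℝ) := by
  constructor
  · rintro (h | h)
    · have := cnt_mono D X Y
      have h0 : cntD D (X ∪ Y) = 0 := by omega
      simp [h, h0]
    · linarith
  · intro h
    right; linarith

lemma sum_map_finsum {n k : ℕ} (D : Multiset (Finset (Fin n))) (L : Finset (Fin k))
    (g : Fin k → Finset (Fin n) → ℝ) :
    (D.map fun Z => ∑ i ∈ L, g i Z).sum = ∑ i ∈ L, (D.map fun Z => g i Z).sum := by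
  induction D using Multiset.induction with
  | empty => simp
  | cons a s ih =>
    simp only [Multiset.map_cons, Multiset.sum_cons, ih, ← Finset.sum_add_distrib]

lemma sum_map_le {α : Type*} (D : Multiset α) (f g : α → ℝ) (h : ∀ a, f a ≤ g a) :
    (D.map f).sum ≤ (D.map g).sum := by
  induction D using Multiset.induction with
  | empty => simp
  | cons a s ih =>
    simp only [Multiset.map_cons, Multiset.sum_cons]
    exact add_le_add (h a) ih

theorem stmt6 {n k : ℕ} (γ : ℝ) (hγ0 : 0 < γ) (hγ1 : γ < 1) (hk : 1 ≤ k)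
    (P : Fin k → Finset (Fin n) × Finset (Fin n)) (X₀ Y₀ : Finset (Fin n))
    (hproper : properFrom γ P Finset.univ X₀ Y₀)
    (lam : Fin k → ℝ) (hlam : ∀ i, 0 ≤ lam i)
    (hineq : ∀ Z : Finset (Fin n),
      ∑ i, lam i * wt γ Z (P i).1 (P i).2 ≤ wt γ Z X₀ Y₀) :
    ∀ i, 0 < lam i := by
  intro j
  by_contra h
  have hj : lam j = 0 := le_antisymm (not_lt.mp h) (hlam j)
  apply hproper.2 (Finset.univ.erase j) (Finset.erase_ssubset (Finset.mem_univ j))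
  intro D hD
  rw [sat_iff γ hγ0]
  rw [← wsum_eq]
  have key : ∀ i, 0 ≤ lam i * ((D.map fun Z => wt γ Z (P i).1 (P i).2).sum) := by
    intro i
    by_cases hij : i = j
    · simp [hij, hj]
    · have hi : i ∈ Finset.univ.erase j := Finset.mem_erase.mpr ⟨hij, Finset.mem_univ i⟩
      have := (sat_iff γ hγ0 D (P i).1 (P i).2).mp (hD i hi)
      rw [← wsum_eq] at this
      exact mul_nonneg (hlam i) this
  have h1 : (0:ℝ) ≤ ∑ i, lam i * (D.map fun Z => wt γ Z (P i).1 (P i).2).sum :=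
    Finset.sum_nonneg fun i _ => key i
  have h2 : ∑ i, lam i * (D.map fun Z => wt γ Z (P i).1 (P i).2).sum
      = (D.map fun Z => ∑ i, lam i * wt γ Z (P i).1 (P i).2).sum := by
    rw [sum_map_finsum D Finset.univ (fun i Z => lam i * wt γ Z (P i).1 (P i).2)]
    congr 1
    ext i
    rw [← Multiset.sum_map_mul_left]
  have h3 : (D.map fun Z => ∑ i, lam i * wt γ Z (P i).1 (P i).2).sum
      ≤ (D.map fun Z => wt γ Z X₀ Y₀).sum :=
    sum_map_le D _ _ hineq
  linarith
end

section
/- Let γ be a confidence parameter with 0 < γ < 1, let X₀ → Y₀, X₁ → Y₁, …, X_k → Y_k be partial implications over [n] with k ≥ 1, and assume that the entailment X₁ → Y₁, …, X_k → Y_k ⊨_γ X₀ → Y₀ holds properly. Then for every i ∈ [k], Y₀ ⊆ X₀Y_i (i.e., Y₀ ⊆ X₀ ∪ Y_i). -/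
open Finset

/-! ### Auxiliary material: a Farkas-type lemma and weight-sum reformulations -/

section Farkas
variable {ι : Type*} [Fintype ι]

/-- Dot product of two vectors indexed by a finite type. -/
noncomputable def dpAux (c v : ι → ℝ) : ℝ := ∑ z, c z * v z

lemma dpAux_sub_smul_right (c v w : ι → ℝ) (r : ℝ) :
    dpAux c (v - r • w) = dpAux c v - r * dpAux c w := by
  simp [dpAux, mul_sub, Finset.sum_sub_distrib, Finset.mul_sum, mul_left_comm]

lemma dpAux_sub_smul_left (d c v : ι → ℝ) (r : ℝ) :
    dpAux (d - r • c) v = dpAux d v - r * dpAux c v := by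
  simp [dpAux, sub_mul, Finset.sum_sub_distrib, Finset.mul_sum, mul_assoc]

lemma dpAux_neg_self (b : ι → ℝ) (hb : b ≠ 0) : dpAux (-b) b < 0 := by
  have h1 : 0 < ∑ z, b z * b z := by
    obtain ⟨z, hz⟩ := Function.ne_iff.mp hb
    exact Finset.sum_pos' (fun i _ => mul_self_nonneg _)
      ⟨z, Finset.mem_univ z, mul_self_pos.mpr hz⟩
  have h2 : dpAux (-b) b = -∑ z, b z * b z := by simp [dpAux]
  linarith

lemma farkasAux : ∀ (m : ℕ) (u : Fin m → ι → ℝ) (b : ι → ℝ),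
    (∃ t : Fin m → ℝ, (∀ s, 0 ≤ t s) ∧ b = ∑ s, t s • u s) ∨
    (∃ c : ι → ℝ, (∀ s, 0 ≤ dpAux c (u s)) ∧ dpAux c b < 0) := by
  intro m
  induction m with
  | zero =>
    intro u b
    by_cases hb : b = 0
    · exact Or.inl ⟨0, fun s => le_rfl, by simp [hb]⟩
    · exact Or.inr ⟨-b, fun s => s.elim0, dpAux_neg_self b hb⟩
  | succ m ih =>
    intro u b
    set ul := u (Fin.last m) with hul
    rcases ih (fun s => u s.castSucc) b with ⟨t, ht0, htb⟩ | ⟨c, hc, hcb⟩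
    · refine Or.inl ⟨Fin.snoc t 0, ?_, ?_⟩
      · intro s
        induction s using Fin.lastCases with
        | last => simp
        | cast s => simpa using ht0 s
      · rw [Fin.sum_univ_castSucc]
        simpa using htb
    · by_cases hl : 0 ≤ dpAux c ul
      · refine Or.inr ⟨c, ?_, hcb⟩
        intro s
        induction s using Fin.lastCases with
        | last => exact hl
        | cast s => exact hc s
      · push_neg at hl
        have hne : dpAux c ul ≠ 0 := ne_of_lt hl
        rcases ih (fun s => u s.castSucc - (dpAux c (u s.castSucc) / dpAux c ul) • ul)
            (b - (dpAux c b / dpAux c ul) • ul) with ⟨t, ht0, htb⟩ | ⟨d, hd, hdb⟩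
        · set α : ℝ := (dpAux c b - ∑ s, t s * dpAux c (u s.castSucc)) / dpAux c ul with hα
          refine Or.inl ⟨Fin.snoc t α, ?_, ?_⟩
          · intro s
            induction s using Fin.lastCases with
            | last =>
              have hnum : dpAux c b - ∑ s, t s * dpAux c (u s.castSucc) < 0 := by
                have : 0 ≤ ∑ s, t s * dpAux c (u s.castSucc) :=
                  Finset.sum_nonneg fun s _ => mul_nonneg (ht0 s) (hc s)
                linarith
              simp only [Fin.snoc_last]
              exact le_of_lt (div_pos_of_neg_of_neg hnum hl)
            | cast s => simpa using ht0 s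
          · rw [Fin.sum_univ_castSucc]
            simp only [Fin.snoc_castSucc, Fin.snoc_last]
            have expand : b = (∑ s, t s • (u s.castSucc - (dpAux c (u s.castSucc) / dpAux c ul) • ul))
                + (dpAux c b / dpAux c ul) • ul := by
              rw [← htb]; abel
            rw [expand]
            funext z
            simp only [Finset.sum_apply, Pi.add_apply, Pi.smul_apply, Pi.sub_apply,
              smul_eq_mul]
            have h1 : ∑ x : Fin m, t x * (u x.castSucc z - dpAux c (u x.castSucc) / dpAux c ul * ul z)
                = (∑ x : Fin m, t x * u x.castSucc z)
                  - (∑ x : Fin m, t x * dpAux c (u x.castSucc)) * (ul z / dpAux c ul) := by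
              rw [Finset.sum_mul, ← Finset.sum_sub_distrib]
              exact Finset.sum_congr rfl fun x _ => by ring
            rw [h1, hα]
            have : u (Fin.last m) z = ul z := rfl
            rw [this]
            field_simp
            ring
        · refine Or.inr ⟨d - (dpAux d ul / dpAux c ul) • c, ?_, ?_⟩
          · intro s
            rw [dpAux_sub_smul_left]
            induction s using Fin.lastCases with
            | last =>
              rw [← hul, div_mul_cancel₀ _ hne]; simp
            | cast s =>
              have h := hd s
              rw [dpAux_sub_smul_right] at h
              have heq : dpAux c (u s.castSucc) / dpAux c ul * dpAux d ul
                  = dpAux d ul / dpAux c ul * dpAux c (u s.castSucc) := by ring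
              linarith
          · rw [dpAux_sub_smul_left]
            rw [dpAux_sub_smul_right] at hdb
            have heq : dpAux c b / dpAux c ul * dpAux d ul
                = dpAux d ul / dpAux c ul * dpAux c b := by ring
            linarith

lemma dpAux_single [DecidableEq ι] (c : ι → ℝ) (W : ι) : dpAux c (Pi.single W 1) = c W := by
  unfold dpAux
  simp only [Pi.single_apply, mul_ite, mul_one, mul_zero]
  rw [Finset.sum_ite_eq' Finset.univ W c, if_pos (Finset.mem_univ W)]

lemma dpAux_add_single [DecidableEq ι] (c : ι → ℝ) (t : ℝ) (U : ι) (v : ι → ℝ) :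
    dpAux (fun z => c z + if z = U then t else 0) v = dpAux c v + t * v U := by
  unfold dpAux
  simp only [add_mul, Finset.sum_add_distrib, ite_mul, zero_mul]
  congr 1
  rw [Finset.sum_ite_eq' Finset.univ U (fun z => t * v z), if_pos (Finset.mem_univ U)]

lemma approxAux (c' : ι → ℝ) (hc' : ∀ z, 0 ≤ c' z) (M : ℕ) (f : ι → ℝ) (hf : ∀ z, |f z| ≤ 1) :
    |(∑ z, (⌈(M : ℝ) * c' z⌉₊ : ℝ) * f z) - (M : ℝ) * dpAux c' f| ≤ (Fintype.card ι : ℝ) := by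
  unfold dpAux
  rw [Finset.mul_sum, ← Finset.sum_sub_distrib]
  calc |∑ z, ((⌈(M : ℝ) * c' z⌉₊ : ℝ) * f z - (M : ℝ) * (c' z * f z))|
      ≤ ∑ z, |(⌈(M : ℝ) * c' z⌉₊ : ℝ) * f z - (M : ℝ) * (c' z * f z)| :=
        Finset.abs_sum_le_sum_abs _ _
    _ ≤ ∑ _z : ι, (1 : ℝ) := by
        apply Finset.sum_le_sum
        intro z _
        have h1 : ((⌈(M : ℝ) * c' z⌉₊ : ℝ) * f z - (M : ℝ) * (c' z * f z))
            = ((⌈(M : ℝ) * c' z⌉₊ : ℝ) - (M : ℝ) * c' z) * f z := by ring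
        rw [h1, abs_mul]
        have hnn : 0 ≤ (M : ℝ) * c' z := mul_nonneg (Nat.cast_nonneg _) (hc' z)
        have h2 : |(⌈(M : ℝ) * c' z⌉₊ : ℝ) - (M : ℝ) * c' z| ≤ 1 := by
          rw [abs_of_nonneg (by linarith [Nat.le_ceil ((M : ℝ) * c' z)])]
          linarith [Nat.ceil_lt_add_one hnn]
        calc |(⌈(M : ℝ) * c' z⌉₊ : ℝ) - (M : ℝ) * c' z| * |f z| ≤ 1 * 1 :=
              mul_le_mul h2 (hf z) (abs_nonneg _) zero_le_one
          _ = 1 := one_mul 1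
    _ = (Fintype.card ι : ℝ) := by simp

end Farkas

section WtLemmas
variable {n : ℕ}

lemma cntD_cons (a : Finset (Fin n)) (D : Multiset (Finset (Fin n))) (X : Finset (Fin n)) :
    cntD (a ::ₘ D) X = (if X ⊆ a then 1 else 0) + cntD D X := by
  unfold cntD
  rw [Multiset.filter_cons, Multiset.card_add]
  split <;> simp

lemma cntD_mono (D : Multiset (Finset (Fin n))) (X Y : Finset (Fin n)) :
    cntD D (X ∪ Y) ≤ cntD D X := by
  apply Multiset.card_le_card
  exact Multiset.monotone_filter_right D fun Z h => Finset.subset_union_left.trans h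

lemma sum_map_wt (γ : ℝ) (D : Multiset (Finset (Fin n))) (X Y : Finset (Fin n)) :
    (D.map fun Z => wt γ Z X Y).sum = (cntD D (X ∪ Y) : ℝ) - γ * (cntD D X : ℝ) := by
  induction D using Multiset.induction with
  | empty => simp [cntD]
  | cons a D ih =>
    rw [Multiset.map_cons, Multiset.sum_cons, ih, cntD_cons, cntD_cons]
    unfold wt
    by_cases h1 : X ∪ Y ⊆ a
    · have h2 : X ⊆ a := Finset.subset_union_left.trans h1
      simp only [h1, h2, if_true]
      push_cast; ring
    · by_cases h2 : X ⊆ a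
      · simp only [h1, h2, if_true, if_false]
        push_cast; ring
      · simp only [h1, h2, if_false]
        push_cast; ring

lemma satPI_iff (γ : ℝ) (D : Multiset (Finset (Fin n))) (X Y : Finset (Fin n)) :
    satPI γ D X Y ↔ 0 ≤ (D.map fun Z => wt γ Z X Y).sum := by
  rw [sum_map_wt]
  constructor
  · rintro (h | h)
    · have h2 : cntD D (X ∪ Y) = 0 := Nat.le_zero.mp (h ▸ cntD_mono D X Y)
      simp [h, h2]
    · linarith
  · intro h; right; linarith

lemma map_sum_comm {B : Type*} (D : Multiset (Finset (Fin n))) (s : Finset B)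
    (f : B → Finset (Fin n) → ℝ) :
    (D.map fun Z => ∑ j ∈ s, f j Z).sum = ∑ j ∈ s, (D.map (f j)).sum := by
  induction D using Multiset.induction with
  | empty => simp
  | cons a D ih => simp [ih, Finset.sum_add_distrib]

lemma wt_abs_le {γ : ℝ} (hγ0 : 0 < γ) (hγ1 : γ < 1) (Z X Y : Finset (Fin n)) :
    |wt γ Z X Y| ≤ 1 := by
  unfold wt
  split_ifs
  · rw [abs_of_nonneg (by linarith)]; linarith
  · rw [abs_of_nonpos (by linarith)]; linarith
  · simp

lemma wt_ge {γ : ℝ} (hγ0 : 0 < γ) (hγ1 : γ < 1) (Z X Y : Finset (Fin n)) :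
    -γ ≤ wt γ Z X Y := by
  unfold wt; split_ifs <;> linarith

lemma wt_top {γ : ℝ} (X Y : Finset (Fin n)) :
    wt γ (Finset.univ : Finset (Fin n)) X Y = 1 - γ := by
  unfold wt; rw [if_pos (Finset.subset_univ _)]

end WtLemmas

/-- Soundness: a nonnegative pointwise certificate yields entailment. -/
lemma cert_entails {n k : ℕ} {γ : ℝ} (P : Fin k → Finset (Fin n) × Finset (Fin n))
    (X₀ Y₀ : Finset (Fin n)) (L : Finset (Fin k)) (lam : Fin k → ℝ)
    (h0 : ∀ j ∈ L, 0 ≤ lam j)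
    (hpt : ∀ Z : Finset (Fin n), ∑ j ∈ L, lam j * wt γ Z (P j).1 (P j).2 ≤ wt γ Z X₀ Y₀) :
    entailsFrom γ P L X₀ Y₀ := by
  intro D hD
  rw [satPI_iff]
  have h1 : (D.map fun Z => ∑ j ∈ L, lam j * wt γ Z (P j).1 (P j).2).sum
      ≤ (D.map fun Z => wt γ Z X₀ Y₀).sum :=
    Multiset.sum_map_le_sum_map _ _ fun Z _ => hpt Z
  have h2 : (D.map fun Z => ∑ j ∈ L, lam j * wt γ Z (P j).1 (P j).2).sum
      = ∑ j ∈ L, lam j * (D.map fun Z => wt γ Z (P j).1 (P j).2).sum := by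
    rw [map_sum_comm]
    exact Finset.sum_congr rfl fun j _ => Multiset.sum_map_mul_left
  have h3 : 0 ≤ ∑ j ∈ L, lam j * (D.map fun Z => wt γ Z (P j).1 (P j).2).sum :=
    Finset.sum_nonneg fun j hj => mul_nonneg (h0 j hj) ((satPI_iff _ _ _ _).mp (hD j hj))
  linarith

/-- Completeness: entailment from all premises yields a nonnegative certificate. -/
lemma exists_cert {n k : ℕ} {γ : ℝ} (hγ0 : 0 < γ) (hγ1 : γ < 1)
    (P : Fin k → Finset (Fin n) × Finset (Fin n)) (X₀ Y₀ : Finset (Fin n))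
    (hent : entailsFrom γ P Finset.univ X₀ Y₀) :
    ∃ lam : Fin k → ℝ, (∀ j, 0 ≤ lam j) ∧
      ∀ Z : Finset (Fin n), ∑ j, lam j * wt γ Z (P j).1 (P j).2 ≤ wt γ Z X₀ Y₀ := by
  classical
  set w0 : Finset (Fin n) → ℝ := fun Z => wt γ Z X₀ Y₀ with hw0
  set g : Fin k ⊕ Finset (Fin n) → Finset (Fin n) → ℝ :=
    Sum.elim (fun j Z => wt γ Z (P j).1 (P j).2) (fun W => Pi.single W 1) with hg
  set e := Fintype.equivFin (Fin k ⊕ Finset (Fin n)) with he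
  rcases farkasAux (Fintype.card (Fin k ⊕ Finset (Fin n))) (fun s => g (e.symm s)) w0 with
    ⟨t, ht0, htb⟩ | ⟨c, hc, hcb⟩
  · refine ⟨fun j => t (e (Sum.inl j)), fun j => ht0 _, fun Z => ?_⟩
    have hb : w0 = ∑ σ : Fin k ⊕ Finset (Fin n), t (e σ) • g σ := by
      rw [htb]
      exact (Fintype.sum_equiv e (fun σ => t (e σ) • g σ) (fun s => t s • g (e.symm s))
        (fun σ => by simp)).symm
    have hZ := congrFun hb Z
    rw [Finset.sum_apply] at hZ
    rw [Fintype.sum_sum_type] at hZ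
    simp only [Pi.smul_apply, smul_eq_mul] at hZ
    have hinr : ∑ W : Finset (Fin n), t (e (Sum.inr W)) * g (Sum.inr W) Z
        = t (e (Sum.inr Z)) := by
      simp only [hg, Sum.elim_inr, Pi.single_apply, mul_ite, mul_one, mul_zero]
      rw [Finset.sum_ite_eq Finset.univ Z (fun W => t (e (Sum.inr W)))]
      · simp
    rw [hinr] at hZ
    simp only [hg, Sum.elim_inl] at hZ
    have hnn := ht0 (e (Sum.inr Z))
    linarith [hZ.ge, hZ.le]
  · exfalso
    have hcg : ∀ σ, 0 ≤ dpAux c (g σ) := fun σ => by simpa using hc (e σ)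
    have hcnn : ∀ W, 0 ≤ c W := fun W => by
      have h := hcg (Sum.inr W)
      simpa [hg, dpAux_single] using h
    have hwj : ∀ j : Fin k, 0 ≤ dpAux c (fun Z => wt γ Z (P j).1 (P j).2) := fun j => hcg (Sum.inl j)
    set δ : ℝ := -dpAux c w0 with hδ
    have hδpos : 0 < δ := by rw [hδ]; linarith
    set tt : ℝ := δ / (2 * (1 - γ)) with htt
    have httpos : 0 < tt := div_pos hδpos (by linarith)
    set c' : Finset (Fin n) → ℝ := fun Z => c Z + if Z = Finset.univ then tt else 0 with hc'
    have hc'nn : ∀ z, 0 ≤ c' z := by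
      intro z
      rw [hc']
      dsimp only
      split_ifs with h
      · linarith [hcnn z, httpos.le]
      · simpa using hcnn z
    have hdpc' : ∀ v : Finset (Fin n) → ℝ, dpAux c' v = dpAux c v + tt * v Finset.univ :=
      fun v => dpAux_add_single c tt Finset.univ v
    have hkey : tt * (1 - γ) = δ / 2 := by
      rw [htt]
      calc δ / (2 * (1 - γ)) * (1 - γ) = (1 - γ) * δ / ((1 - γ) * 2) := by ring
        _ = δ / 2 := mul_div_mul_left _ _ (by linarith)
    have hdcw0 : dpAux c w0 = -δ := by rw [hδ]; ring
    have hwu : w0 Finset.univ = 1 - γ := wt_top X₀ Y₀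
    have hdc'w0 : dpAux c' w0 = -(δ / 2) := by
      rw [hdpc', hdcw0, hwu, hkey]; ring
    have hdc'wj : ∀ j, δ / 2 ≤ dpAux c' (fun Z => wt γ Z (P j).1 (P j).2) := by
      intro j
      rw [hdpc', wt_top]
      linarith [hwj j, hkey.ge, hkey.le]
    obtain ⟨M, hM⟩ := exists_nat_gt ((Fintype.card (Finset (Fin n)) : ℝ) / (δ / 2))
    have hMδ : (Fintype.card (Finset (Fin n)) : ℝ) < M * (δ / 2) := by
      rw [div_lt_iff₀ (by linarith : (0:ℝ) < δ / 2)] at hM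
      linarith
    set a : Finset (Fin n) → ℕ := fun Z => ⌈(M : ℝ) * c' Z⌉₊ with ha
    set D : Multiset (Finset (Fin n)) :=
      Finset.univ.val.bind (fun Z => Multiset.replicate (a Z) Z) with hDdef
    have hsum : ∀ f : Finset (Fin n) → ℝ, (D.map f).sum = ∑ Z, (a Z : ℝ) * f Z := by
      intro f
      rw [hDdef, Multiset.map_bind, Multiset.sum_bind]
      simp only [Multiset.map_replicate, Multiset.sum_replicate, nsmul_eq_mul]
      rfl
    have hprem : ∀ j ∈ (Finset.univ : Finset (Fin k)), satPI γ D (P j).1 (P j).2 := by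
      intro j _
      rw [satPI_iff, hsum]
      have h1 := approxAux c' hc'nn M _ (fun Z => wt_abs_le hγ0 hγ1 Z (P j).1 (P j).2)
      have h4 := abs_le.mp h1
      have h3 : (M : ℝ) * (δ / 2) ≤ (M : ℝ) * dpAux c' (fun Z => wt γ Z (P j).1 (P j).2) :=
        mul_le_mul_of_nonneg_left (hdc'wj j) (Nat.cast_nonneg M)
      simp only [ha] at h4 ⊢
      linarith [h4.1, h4.2, hMδ]
    have hcon := hent D hprem
    rw [satPI_iff, hsum] at hcon
    have h1 := approxAux c' hc'nn M w0 (fun Z => wt_abs_le hγ0 hγ1 Z X₀ Y₀)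
    have h4 := abs_le.mp h1
    have h5 : (M : ℝ) * dpAux c' w0 = -((M : ℝ) * (δ / 2)) := by rw [hdc'w0]; ring
    simp only [hw0] at h4 h5
    simp only [ha, hw0] at hcon
    linarith [h4.1, h4.2, hMδ, hcon]

theorem stmt10 {n k : ℕ} (γ : ℝ) (hγ0 : 0 < γ) (hγ1 : γ < 1) (hk : 1 ≤ k)
    (P : Fin k → Finset (Fin n) × Finset (Fin n)) (X₀ Y₀ : Finset (Fin n))
    (hproper : properFrom γ P Finset.univ X₀ Y₀) :
    ∀ i, Y₀ ⊆ X₀ ∪ (P i).2 := by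
  intro i
  by_contra hnot
  obtain ⟨a, haY, haX⟩ := Finset.not_subset.mp hnot
  have haX0 : a ∉ X₀ := fun h => haX (Finset.mem_union_left _ h)
  have haYi : a ∉ (P i).2 := fun h => haX (Finset.mem_union_right _ h)
  obtain ⟨lam, hlam0, hcert⟩ := exists_cert hγ0 hγ1 P X₀ Y₀ hproper.1
  -- the weight of premise `i` must be strictly positive
  have hlami : 0 < lam i := by
    rcases lt_or_eq_of_le (hlam0 i) with h | h
    · exact h
    · exfalso
      apply hproper.2 (Finset.univ.erase i) (Finset.erase_ssubset (Finset.mem_univ i))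
      apply cert_entails P X₀ Y₀ _ lam (fun j _ => hlam0 j)
      intro Z
      have hc := hcert Z
      rw [← Finset.sum_erase_add Finset.univ _ (Finset.mem_univ i), ← h] at hc
      simpa using hc
  -- total weight is at most 1
  have hsum1 : ∑ j, lam j ≤ 1 := by
    have hc := hcert Finset.univ
    rw [wt_top] at hc
    have hL : ∑ j, lam j * wt γ (Finset.univ : Finset (Fin n)) (P j).1 (P j).2
        = (∑ j, lam j) * (1 - γ) := by
      rw [Finset.sum_mul]
      exact Finset.sum_congr rfl fun j _ => by rw [wt_top]
    rw [hL] at hc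
    have h1γ : (0:ℝ) < 1 - γ := by linarith
    nlinarith [hc, h1γ]
  -- the killer transaction
  set U : Finset (Fin n) := X₀ ∪ Y₀ ∪ Finset.univ.sup (fun j => (P j).1 ∪ (P j).2) with hU
  set Zs : Finset (Fin n) := U.erase a with hZs
  have haZs : a ∉ Zs := Finset.notMem_erase a U
  have hX0Zs : X₀ ⊆ Zs := by
    rw [hZs]
    apply Finset.subset_erase.mpr
    refine ⟨?_, haX0⟩
    exact Finset.subset_union_left.trans Finset.subset_union_left
  have hw0Zs : wt γ Zs X₀ Y₀ = -γ := by
    unfold wt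
    rw [if_neg, if_pos hX0Zs]
    intro hcontra
    exact haZs (hcontra (Finset.mem_union_right _ haY))
  have hwtiZs : 0 ≤ wt γ Zs (P i).1 (P i).2 := by
    by_cases hai : a ∈ (P i).1
    · unfold wt
      rw [if_neg, if_neg]
      · intro hcontra; exact haZs (hcontra hai)
      · intro hcontra; exact haZs (hcontra (Finset.mem_union_left _ hai))
    · have hsub : (P i).1 ∪ (P i).2 ⊆ Zs := by
        rw [hZs]
        apply Finset.subset_erase.mpr
        constructor
        · have hle : (P i).1 ∪ (P i).2 ≤ Finset.univ.sup (fun j => (P j).1 ∪ (P j).2) :=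
            Finset.le_sup (f := fun j => (P j).1 ∪ (P j).2) (Finset.mem_univ i)
          exact le_trans hle Finset.subset_union_right
        · intro hmem
          rcases Finset.mem_union.mp hmem with h | h
          · exact hai h
          · exact haYi h
      unfold wt
      rw [if_pos hsub]
      linarith
  have hfinal := hcert Zs
  rw [hw0Zs, ← Finset.sum_erase_add Finset.univ _ (Finset.mem_univ i)] at hfinal
  have h5 : ∑ j ∈ Finset.univ.erase i, (-γ) * lam j
      ≤ ∑ j ∈ Finset.univ.erase i, lam j * wt γ Zs (P j).1 (P j).2 := by
    apply Finset.sum_le_sum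
    intro j hj
    have hge := wt_ge hγ0 hγ1 Zs (P j).1 (P j).2
    nlinarith [hlam0 j, hge]
  have h6 : ∑ j ∈ Finset.univ.erase i, (-γ) * lam j
      = -γ * ∑ j ∈ Finset.univ.erase i, lam j := by rw [← Finset.mul_sum]
  have h7 : ∑ j ∈ Finset.univ.erase i, lam j ≤ 1 - lam i := by
    have he := Finset.sum_erase_add Finset.univ lam (Finset.mem_univ i)
    linarith [hsum1, he.ge, he.le]
  have h8 : 0 ≤ lam i * wt γ Zs (P i).1 (P i).2 := mul_nonneg hlami.le hwtiZs
  have h9 : -γ * (1 - lam i) ≤ -γ * ∑ j ∈ Finset.univ.erase i, lam j := by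
    apply mul_le_mul_of_nonpos_left h7 (by linarith)
  nlinarith [hfinal, h5, h6.ge, h6.le, h8, h9, mul_pos hγ0 hlami]
end

section
/- Let γ be a confidence parameter with 0 < γ < 1 and let X₀ → Y₀, X₁ → Y₁, …, X_k → Y_k be partial implications over [n] with k ≥ 1. If γ < 1/k, then the following are equivalent: (1) X₁ → Y₁, …, X_k → Y_k ⊨_γ X₀ → Y₀; (2) X_i → Y_i ⊨_γ X₀ → Y₀ for some i ∈ [k]; (3) either Y₀ ⊆ X₀, or for some i ∈ [k] both X_i ⊆ X₀ and X₀Y₀ ⊆ X_iY_i. -/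
open Finset

lemma cntD_replicate {n : ℕ} (m : ℕ) (Z X : Finset (Fin n)) :
    cntD (Multiset.replicate m Z) X = if X ⊆ Z then m else 0 := by
  unfold cntD
  induction m with
  | zero => simp
  | succ m ih =>
    rw [Multiset.replicate_succ, Multiset.filter_cons]
    split <;> simp_all [Multiset.card_add]

lemma cntD_add {n : ℕ} (D₁ D₂ : Multiset (Finset (Fin n))) (X : Finset (Fin n)) :
    cntD (D₁ + D₂) X = cntD D₁ X + cntD D₂ X := by
  unfold cntD; rw [Multiset.filter_add, Multiset.card_add]

lemma cntD_sum {n : ℕ} {α : Type*} (s : Finset α) (f : α → Multiset (Finset (Fin n)))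
    (X : Finset (Fin n)) : cntD (∑ i ∈ s, f i) X = ∑ i ∈ s, cntD (f i) X := by
  classical
  induction s using Finset.induction_on with
  | empty => simp [cntD]
  | insert _ _ h ih => rw [Finset.sum_insert h, Finset.sum_insert h, cntD_add, ih]

lemma cntD_le_card {n : ℕ} (D : Multiset (Finset (Fin n))) (X : Finset (Fin n)) :
    cntD D X ≤ Multiset.card D := Multiset.card_le_card (Multiset.filter_le _ _)

lemma cntD_anti {n : ℕ} (D : Multiset (Finset (Fin n))) {X X' : Finset (Fin n)}
    (h : X ⊆ X') : cntD D X' ≤ cntD D X := by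
  apply Multiset.card_le_card
  apply Multiset.monotone_filter_right
  intro Z hZ
  exact h.trans hZ

lemma satPI_of_subset {n : ℕ} {γ : ℝ} (hγ1 : γ ≤ 1) (D : Multiset (Finset (Fin n)))
    {X Y : Finset (Fin n)} (h : Y ⊆ X) : satPI γ D X Y := by
  right
  rw [Finset.union_eq_left.2 h]
  have : (0:ℝ) ≤ (cntD D X : ℝ) := Nat.cast_nonneg _
  nlinarith

lemma satPI_single {n : ℕ} {γ : ℝ} (hγ0 : 0 < γ) (D : Multiset (Finset (Fin n)))
    {X Y X₀ Y₀ : Finset (Fin n)} (h1 : X ⊆ X₀) (h2 : X₀ ∪ Y₀ ⊆ X ∪ Y)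
    (hs : satPI γ D X Y) : satPI γ D X₀ Y₀ := by
  have hm1 : cntD D X₀ ≤ cntD D X := cntD_anti D h1
  have hm2 : cntD D (X ∪ Y) ≤ cntD D (X₀ ∪ Y₀) := cntD_anti D h2
  rcases hs with h | h
  · left; omega
  · right
    calc γ * (cntD D X₀ : ℝ) ≤ γ * (cntD D X : ℝ) := by
          apply mul_le_mul_of_nonneg_left (Nat.cast_le.2 hm1) hγ0.le
    _ ≤ (cntD D (X ∪ Y) : ℝ) := h
    _ ≤ _ := Nat.cast_le.2 hm2

lemma tele (g : ℕ → ℕ) (hg : ∀ d, g (d+1) ≤ g d) :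
    ∀ a b, ∑ d ∈ Finset.Icc a b, (g d - g (d+1)) = g a - g (b+1) := by
  have hanti : ∀ a b, a ≤ b → g b ≤ g a := fun a b h =>
    (antitone_nat_of_succ_le hg) h
  intro a b
  induction b with
  | zero =>
    rcases Nat.eq_zero_or_pos a with rfl | ha
    · simp
    · rw [Finset.Icc_eq_empty (by omega)]
      have := hanti 1 a (by omega)
      simp; omega
  | succ b ih =>
    rcases le_or_gt a (b+1) with h | h
    · rw [Finset.sum_Icc_succ_top h, ih]
      have h1 := hanti a (b+1) h
      have h2 := hg (b+1)
      omega
    · rw [Finset.Icc_eq_empty (by omega), Finset.sum_empty]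
      have := hanti (b+1+1) a (by omega)
      omega

variable {n k : ℕ}

/-- The cascade of activated premise indices. -/
def Achain (P : Fin k → Finset (Fin n) × Finset (Fin n)) (X₀ : Finset (Fin n)) :
    ℕ → Finset (Fin k)
  | 0 => Finset.univ.filter fun i => (P i).1 ⊆ X₀
  | (d+1) => Achain P X₀ d ∪ (Finset.univ.filter fun i =>
      (P i).1 ⊆ (Achain P X₀ d).sup (fun j => (P j).1 ∪ (P j).2))

lemma Achain_succ (P : Fin k → Finset (Fin n) × Finset (Fin n)) (X₀ : Finset (Fin n))
    (d : ℕ) :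
    Achain P X₀ (d+1) = Achain P X₀ d ∪ (Finset.univ.filter fun i =>
      (P i).1 ⊆ (Achain P X₀ d).sup (fun j => (P j).1 ∪ (P j).2)) := rfl

lemma Achain_mono (P : Fin k → Finset (Fin n) × Finset (Fin n)) (X₀ : Finset (Fin n)) :
    Monotone (Achain P X₀) := by
  apply monotone_nat_of_le_succ
  intro d
  exact Finset.subset_union_left

lemma Achain_stab (P : Fin k → Finset (Fin n) × Finset (Fin n)) (X₀ : Finset (Fin n)) :
    Achain P X₀ (k + 2) = Achain P X₀ (k + 1) := by
  classical
  have key : ∃ d ≤ k, Achain P X₀ (d+1) = Achain P X₀ d := by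
    by_contra hc
    push_neg at hc
    have hstrict : ∀ d ≤ k, Achain P X₀ d ⊂ Achain P X₀ (d+1) := fun d hd =>
      (Finset.ssubset_iff_subset_ne).2 ⟨Achain_mono P X₀ (Nat.le_succ d), fun h => hc d hd h.symm⟩
    have hcard : ∀ d, d ≤ k + 1 → d ≤ (Achain P X₀ d).card := by
      intro d
      induction d with
      | zero => simp
      | succ d ih =>
        intro hd
        have h1 := ih (by omega)
        have h2 := Finset.card_lt_card (hstrict d (by omega))
        omega
    have := hcard (k+1) le_rfl
    have hle : (Achain P X₀ (k+1)).card ≤ k := by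
      simpa using Finset.card_le_univ (Achain P X₀ (k+1))
    omega
  obtain ⟨d, hd, hfix⟩ := key
  have hprop : ∀ j, Achain P X₀ (d + j) = Achain P X₀ d := by
    intro j
    induction j with
    | zero => rfl
    | succ j ih =>
      show Achain P X₀ ((d + j) + 1) = _
      rw [Achain_succ, ih, ← Achain_succ, hfix]
  have e1 := hprop (k + 2 - d)
  have e2 := hprop (k + 1 - d)
  rw [show d + (k+2-d) = k+2 by omega] at e1
  rw [show d + (k+1-d) = k+1 by omega] at e2
  rw [e1, e2]

set_option maxHeartbeats 1000000 in
lemma construction {n k : ℕ} (γ : ℝ) (hγ0 : 0 < γ) (hγ1 : γ < 1) (hk : 1 ≤ k)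
    (P : Fin k → Finset (Fin n) × Finset (Fin n)) (X₀ Y₀ : Finset (Fin n))
    (hγk : γ * k < 1) (hY : ¬ Y₀ ⊆ X₀)
    (hno : ∀ i, ¬((P i).1 ⊆ X₀ ∧ X₀ ∪ Y₀ ⊆ (P i).1 ∪ (P i).2)) :
    ¬ entailsFrom γ P Finset.univ X₀ Y₀ := by
  classical
  intro hent
  -- ## numeric setup
  set β : ℝ := 1 + k * (1 - γ) with hβ
  have hk1 : (1:ℝ) ≤ (k:ℝ) := by exact_mod_cast hk
  have hβ1 : 1 < β := by
    have : (0:ℝ) < k * (1 - γ) := mul_pos (by linarith) (by linarith)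
    linarith
  have hβγ : 0 < 1 - γ * β := by
    have h1 : 1 - γ * β = (1-γ) * (1 - γ*k) := by rw [hβ]; ring
    rw [h1]
    exact mul_pos (by linarith) (by linarith)
  obtain ⟨q, hq⟩ := exists_nat_gt (β / (1 - γ * β))
  have hqpos : (0:ℝ) < q := lt_trans (div_pos (by linarith) hβγ) hq
  have hq0 : 0 < q := by exact_mod_cast hqpos
  set p : ℕ := Nat.floor ((q:ℝ) * γ) + 1 with hpdef
  have hp1 : γ * q < p := by
    have := Nat.lt_floor_add_one ((q:ℝ) * γ)
    push_cast [hpdef]; linarith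
  have hple : (p:ℝ) ≤ q * γ + 1 := by
    have := Nat.floor_le (mul_nonneg hqpos.le hγ0.le)
    push_cast [hpdef]; linarith
  have hp2 : (p:ℝ) * β < q := by
    rw [div_lt_iff₀ hβγ] at hq
    nlinarith
  have hpq : p < q := by
    have hp0' : (1:ℝ) ≤ (p:ℝ) := by exact_mod_cast Nat.succ_le_succ (Nat.zero_le _)
    have : (p:ℝ) < q := by nlinarith
    exact_mod_cast this
  have hp0 : 0 < p := Nat.succ_pos _
  set K : ℕ := k + 1 with hK
  set s : ℕ → ℕ := fun d => if d ≤ K then k * p^d * q^(K-d) else 0 with hs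
  have hsdec : ∀ d, s (d+1) ≤ s d := by
    intro d
    by_cases h1 : d + 1 ≤ K
    · have h2 : d ≤ K := by omega
      simp only [hs, if_pos h1, if_pos h2]
      have he : K - d = (K - (d+1)) + 1 := by omega
      rw [he, pow_succ p d, pow_succ q (K-(d+1))]
      calc k * (p^d * p) * q^(K-(d+1)) = (k * p^d * q^(K-(d+1))) * p := by ring
        _ ≤ (k * p^d * q^(K-(d+1))) * q := Nat.mul_le_mul_left _ hpq.le
        _ = k * p^d * (q^(K-(d+1)) * q) := by ring
    · simp only [hs, if_neg h1]
      exact Nat.zero_le _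
  have hsid : ∀ e, e < K → q * s (e+1) = p * s e := by
    intro e he
    have h1 : e + 1 ≤ K := by omega
    have h2 : e ≤ K := by omega
    simp only [hs, if_pos h1, if_pos h2]
    have heq : K - e = (K - (e+1)) + 1 := by omega
    rw [heq, pow_succ p e, pow_succ q (K-(e+1))]
    ring
  have hN1 : ∀ e, e < K → γ * (s e : ℝ) ≤ (s (e+1) : ℝ) := by
    intro e he
    have hid : (q:ℝ) * (s (e+1) : ℝ) = (p:ℝ) * (s e : ℝ) := by exact_mod_cast hsid e he
    have h0 : (0:ℝ) ≤ (s e : ℝ) := Nat.cast_nonneg _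
    nlinarith [mul_le_mul_of_nonneg_right hp1.le h0]
  set b₀ : ℕ := (q - p) * q^(K-1) with hb₀
  have hs0 : k * b₀ + s 1 = s 0 := by
    have h1 : (1:ℕ) ≤ K := by omega
    simp only [hs, hb₀, if_pos h1, if_pos (Nat.zero_le K)]
    rw [show K - 0 = (K-1)+1 by omega, pow_succ q (K-1)]
    zify [hpq.le]
    ring
  have hs1R : (s 1 : ℝ) = k * p * q^(K-1) := by
    have h1 : (1:ℕ) ≤ K := by omega
    simp only [hs, if_pos h1]
    push_cast [pow_one]
    ring
  have hs1pos : 0 < s 1 := by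
    have h1 : (1:ℕ) ≤ K := by omega
    simp only [hs, if_pos h1, pow_one]
    positivity
  have hδ : 0 < (b₀:ℝ) - (1-γ) * (s 1 : ℝ) := by
    have hb₀R : (b₀:ℝ) = ((q:ℝ) - p) * (q:ℝ)^(K-1) := by
      rw [hb₀]; push_cast [Nat.cast_sub hpq.le]; ring
    rw [hb₀R, hs1R]
    have hqp : (0:ℝ) < (q:ℝ)^(K-1) := by positivity
    have : (q:ℝ) - (p:ℝ) - (1-γ) * (k * p) > 0 := by rw [hβ] at hp2; nlinarith
    nlinarith
  obtain ⟨F, hF⟩ := exists_nat_gt (1 / ((b₀:ℝ) - (1-γ) * (s 1:ℝ)))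
  have hF1 : (1:ℝ) ≤ F * ((b₀:ℝ) - (1-γ) * (s 1:ℝ)) := by
    rw [div_lt_iff₀ hδ] at hF
    linarith
  have hFpos : (0:ℝ) < F := lt_trans (by positivity) hF
  set a : ℕ := Nat.floor ((F:ℝ) * b₀ / γ) with ha
  have haru : γ * a ≤ (F:ℝ) * b₀ := by
    have h1 : (a:ℝ) ≤ (F:ℝ) * b₀ / γ := Nat.floor_le (by positivity)
    calc γ * a ≤ γ * ((F:ℝ) * b₀ / γ) := mul_le_mul_of_nonneg_left h1 hγ0.le
      _ = (F:ℝ) * b₀ := by field_simp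
  have harl : (1-γ) * ((F:ℝ) * (s 1:ℝ)) < γ * a := by
    have h1 : (F:ℝ) * b₀ / γ - 1 < a := Nat.sub_one_lt_floor _
    have h2 : (F:ℝ) * b₀ < ((a:ℝ) + 1) * γ := (div_lt_iff₀ hγ0).1 (by linarith)
    have h3 : (F:ℝ) * b₀ - γ ≥ (1-γ) * ((F:ℝ) * (s 1:ℝ)) := by nlinarith
    nlinarith
  have ha1 : 1 ≤ a := by
    by_contra hc
    have ha0 : a = 0 := by omega
    rw [ha0] at harl
    have hpos : (0:ℝ) < (1-γ) * ((F:ℝ) * (s 1:ℝ)) :=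
      mul_pos (by linarith) (mul_pos hFpos (by exact_mod_cast hs1pos))
    push_cast at harl
    linarith
  -- ## combinatorial setup
  set W : Fin k → Finset (Fin n) := fun j => (P j).1 ∪ (P j).2 with hW
  set A : ℕ → Finset (Fin k) := Achain P X₀ with hA
  set T : ℕ → Finset (Fin n) := fun d => (A d).sup W with hT
  have hA0 : ∀ i : Fin k, i ∈ A 0 ↔ (P i).1 ⊆ X₀ := by
    intro i
    rw [hA]
    show i ∈ Finset.univ.filter _ ↔ _
    simp
  have hAsucc : ∀ d (i : Fin k), i ∈ A (d+1) ↔ (i ∈ A d ∨ (P i).1 ⊆ T d) := by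
    intro d i
    rw [hA, Achain_succ]
    simp [hT, hA, hW]
  have hAmono : ∀ {d e : ℕ}, d ≤ e → ∀ {i : Fin k}, i ∈ A d → i ∈ A e := by
    intro d e hde i hi
    exact Finset.mem_of_subset (Achain_mono P X₀ hde) hi
  have hstab : A (K+1) = A K := Achain_stab P X₀
  have hWT : ∀ d (i : Fin k), i ∈ A d → W i ⊆ T d := fun d i hi => Finset.le_sup hi
  set c : ℕ → ℕ := fun d => F * s d - F * s (d+1) with hc
  set b : ℕ := F * b₀ with hb
  set D : Multiset (Finset (Fin n)) :=
    Multiset.replicate a X₀ + (∑ i ∈ A 0, Multiset.replicate b (W i))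
      + (∑ d ∈ Finset.Icc 1 K, Multiset.replicate (c d) (T d)) with hD
  have hcnt : ∀ X : Finset (Fin n), cntD D X = (if X ⊆ X₀ then a else 0)
      + (∑ i ∈ A 0, if X ⊆ W i then b else 0)
      + (∑ d ∈ Finset.Icc 1 K, if X ⊆ T d then c d else 0) := by
    intro X
    rw [hD, cntD_add, cntD_add, cntD_sum, cntD_sum, cntD_replicate]
    congr 1
    · congr 1
      exact Finset.sum_congr rfl fun i _ => cntD_replicate _ _ _
    · exact Finset.sum_congr rfl fun d _ => cntD_replicate _ _ _
  have hctele : ∀ j, 1 ≤ j → ∑ d ∈ Finset.Icc j K, c d = F * s j := by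
    intro j _
    have ht := tele (fun d => F * s d) (fun d => Nat.mul_le_mul_left F (hsdec d)) j K
    have hz : s (K+1) = 0 := by simp [hs]
    simp only [hc]
    rw [ht, hz, Nat.mul_zero, Nat.sub_zero]
  have hub2 : ∀ X : Finset (Fin n), (∑ i ∈ A 0, if X ⊆ W i then b else 0) ≤ k * b := by
    intro X
    calc (∑ i ∈ A 0, if X ⊆ W i then b else 0) ≤ ∑ _i ∈ A 0, b :=
          Finset.sum_le_sum (fun i _ => by split <;> omega)
      _ = (A 0).card * b := by rw [Finset.sum_const, smul_eq_mul]
      _ ≤ k * b := Nat.mul_le_mul_right _ (le_trans (Finset.card_le_univ _) (by simp))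
  have hub3 : ∀ X : Finset (Fin n),
      (∑ d ∈ Finset.Icc 1 K, if X ⊆ T d then c d else 0) ≤ F * s 1 := by
    intro X
    calc (∑ d ∈ Finset.Icc 1 K, if X ⊆ T d then c d else 0) ≤ ∑ d ∈ Finset.Icc 1 K, c d :=
          Finset.sum_le_sum (fun d _ => by split <;> omega)
      _ = F * s 1 := hctele 1 le_rfl
  have hlb3 : ∀ (i : Fin k) (d₀ : ℕ), 1 ≤ d₀ → d₀ ≤ K → i ∈ A d₀ →
      F * s d₀ ≤ ∑ d ∈ Finset.Icc 1 K, (if W i ⊆ T d then c d else 0) := by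
    intro i d₀ h1 hdK hi
    calc F * s d₀ = ∑ d ∈ Finset.Icc d₀ K, c d := (hctele d₀ h1).symm
      _ = ∑ d ∈ Finset.Icc d₀ K, (if W i ⊆ T d then c d else 0) := by
          apply Finset.sum_congr rfl
          intro d hd
          rw [if_pos (hWT d i (hAmono (Finset.mem_Icc.1 hd).1 hi))]
      _ ≤ ∑ d ∈ Finset.Icc 1 K, (if W i ⊆ T d then c d else 0) :=
          Finset.sum_le_sum_of_subset (Finset.Icc_subset_Icc h1 le_rfl)
  -- ## premises are satisfied
  have hprem : ∀ i : Fin k, satPI γ D (P i).1 (P i).2 := by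
    intro i
    by_cases hiA : i ∈ A K
    · right
      show γ * (cntD D (P i).1 : ℝ) ≤ (cntD D (W i) : ℝ)
      have hex : ∃ d, i ∈ A d := ⟨K, hiA⟩
      have hd₀ : i ∈ A (Nat.find hex) := Nat.find_spec hex
      set d₀ := Nat.find hex with hd₀def
      have hmin : ∀ e, e < d₀ → i ∉ A e := fun e he => Nat.find_min hex he
      have hd₀K : d₀ ≤ K := Nat.find_le hiA
      rcases Nat.lt_or_ge d₀ 2 with hd2 | hd2
      · -- levels 0 and 1
        have hiA1 : i ∈ A 1 := hAmono (show d₀ ≤ 1 by omega) hd₀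
        have hlow := hlb3 i 1 le_rfl (by omega) hiA1
        have hup3 := hub3 (P i).1
        have hup2 := hub2 (P i).1
        have hkb : (k:ℝ) * b + F * (s 1:ℝ) = F * (s 0:ℝ) := by
          have : k * b + F * (s 1) = F * (s 0) := by
            rw [hb, ← hs0]; ring
          exact_mod_cast this
        have hN10 : γ * (s 0:ℝ) ≤ (s 1:ℝ) := hN1 0 (by omega)
        have e2 : γ * ((F:ℝ) * (s 0:ℝ)) ≤ (F:ℝ) * (s 1:ℝ) := by
          have := mul_le_mul_of_nonneg_left hN10 hFpos.le
          nlinarith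
        rcases Nat.eq_zero_or_pos d₀ with h0 | h1
        · -- level 0
          have hiA0 : i ∈ A 0 := h0 ▸ hd₀
          have hlow2 : b ≤ ∑ j ∈ A 0, (if W i ⊆ W j then b else 0) := by
            have := Finset.single_le_sum (f := fun j => if W i ⊆ W j then b else 0)
              (fun j _ => Nat.zero_le _) hiA0
            simpa using this
          have hub : cntD D (P i).1 ≤ a + k * b + F * s 1 := by
            rw [hcnt]
            have t1 : (if (P i).1 ⊆ X₀ then a else 0) ≤ a := by split <;> omega
            omega
          have hlb : b + F * s 1 ≤ cntD D (W i) := by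
            rw [hcnt]
            omega
          have hcastub : (cntD D (P i).1 : ℝ) ≤ (a:ℝ) + k * b + F * (s 1:ℝ) := by
            exact_mod_cast hub
          have hcastlb : (b:ℝ) + (F:ℝ) * (s 1:ℝ) ≤ (cntD D (W i) : ℝ) := by
            exact_mod_cast hlb
          have hbR : (b:ℝ) = (F:ℝ) * (b₀:ℝ) := by exact_mod_cast congrArg (Nat.cast (R := ℝ)) hb
          have m1 : γ * (cntD D (P i).1 : ℝ) ≤ γ * ((a:ℝ) + k * b + F * (s 1:ℝ)) :=
            mul_le_mul_of_nonneg_left hcastub hγ0.le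
          have e1 : γ * ((a:ℝ) + k * b + F * (s 1:ℝ)) = γ * a + γ * ((F:ℝ) * (s 0:ℝ)) := by
            rw [← hkb]; ring
          linarith
        · -- level 1
          have ht1 : (if (P i).1 ⊆ X₀ then a else 0) = 0 :=
            if_neg (fun h => hmin 0 (by omega) ((hA0 i).2 h))
          have hub : cntD D (P i).1 ≤ k * b + F * s 1 := by
            rw [hcnt, ht1]
            omega
          have hlb : F * s 1 ≤ cntD D (W i) := by
            rw [hcnt]
            omega
          have hcastub : (cntD D (P i).1 : ℝ) ≤ (k:ℝ) * b + F * (s 1:ℝ) := by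
            exact_mod_cast hub
          have hcastlb : (F:ℝ) * (s 1:ℝ) ≤ (cntD D (W i) : ℝ) := by
            exact_mod_cast hlb
          have m1 : γ * (cntD D (P i).1 : ℝ) ≤ γ * ((k:ℝ) * b + F * (s 1:ℝ)) :=
            mul_le_mul_of_nonneg_left hcastub hγ0.le
          rw [hkb] at m1
          linarith
      · -- levels ≥ 2
        have ht1 : (if (P i).1 ⊆ X₀ then a else 0) = 0 :=
          if_neg (fun h => hmin 0 (by omega) ((hA0 i).2 h))
        have ht2 : ∀ j ∈ A 0, (if (P i).1 ⊆ W j then b else 0) = 0 := by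
          intro j hj
          apply if_neg
          intro h
          exact hmin 1 (by omega) ((hAsucc 0 i).2 (Or.inr (h.trans (hWT 0 j hj))))
        have ht3 : ∑ d ∈ Finset.Icc 1 K, (if (P i).1 ⊆ T d then c d else 0)
            = ∑ d ∈ Finset.Icc (d₀-1) K, (if (P i).1 ⊆ T d then c d else 0) := by
          symm
          apply Finset.sum_subset (Finset.Icc_subset_Icc (by omega) le_rfl)
          intro d hd hnd
          have hd1 : d < d₀ - 1 := by
            simp only [Finset.mem_Icc] at hd hnd
            omega
          apply if_neg
          intro h
          exact hmin (d+1) (by omega) ((hAsucc d i).2 (Or.inr h))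
        have hub : cntD D (P i).1 ≤ F * s (d₀ - 1) := by
          rw [hcnt, ht1, Finset.sum_eq_zero ht2, ht3]
          have hle : ∑ d ∈ Finset.Icc (d₀-1) K, (if (P i).1 ⊆ T d then c d else 0)
              ≤ ∑ d ∈ Finset.Icc (d₀-1) K, c d :=
            Finset.sum_le_sum (fun d _ => by split <;> omega)
          rw [hctele (d₀-1) (by omega)] at hle
          omega
        have hlb : F * s d₀ ≤ cntD D (W i) := by
          rw [hcnt]
          have := hlb3 i d₀ (by omega) hd₀K hd₀
          omega
        have hNd : γ * (s (d₀-1):ℝ) ≤ (s d₀:ℝ) := by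
          have := hN1 (d₀-1) (by omega)
          rwa [show d₀ - 1 + 1 = d₀ by omega] at this
        have hcastub : (cntD D (P i).1 : ℝ) ≤ (F:ℝ) * (s (d₀-1):ℝ) := by exact_mod_cast hub
        have hcastlb : (F:ℝ) * (s d₀:ℝ) ≤ (cntD D (W i) : ℝ) := by exact_mod_cast hlb
        have m1 : γ * (cntD D (P i).1 : ℝ) ≤ γ * ((F:ℝ) * (s (d₀-1):ℝ)) :=
          mul_le_mul_of_nonneg_left hcastub hγ0.le
        have m2 : γ * ((F:ℝ) * (s (d₀-1):ℝ)) ≤ (F:ℝ) * (s d₀:ℝ) := by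
          have := mul_le_mul_of_nonneg_left hNd hFpos.le
          nlinarith
        linarith
    · -- never activated : zero support
      left
      rw [hcnt]
      have t1 : (if (P i).1 ⊆ X₀ then a else 0) = 0 := by
        apply if_neg
        intro h
        exact hiA (hAmono (Nat.zero_le K) ((hA0 i).2 h))
      have t2 : ∀ j ∈ A 0, (if (P i).1 ⊆ W j then b else 0) = 0 := by
        intro j hj
        apply if_neg
        intro h
        exact hiA (hAmono (show 1 ≤ K by omega) ((hAsucc 0 i).2 (Or.inr (h.trans (hWT 0 j hj)))))
      have t3 : ∀ d ∈ Finset.Icc 1 K, (if (P i).1 ⊆ T d then c d else 0) = 0 := by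
        intro d hd
        apply if_neg
        intro h
        have h1 : i ∈ A (d+1) := (hAsucc d i).2 (Or.inr h)
        have h2 : i ∈ A (K+1) := hAmono (by
          have := (Finset.mem_Icc.1 hd).2
          omega) h1
        rw [hstab] at h2
        exact hiA h2
      rw [t1, Finset.sum_eq_zero t2, Finset.sum_eq_zero t3]
      rfl
  -- ## the conclusion is violated
  have hite : ∀ (m : ℕ) (Z : Finset (Fin n)),
      (if X₀ ∪ Y₀ ⊆ Z then m else 0) ≤ (if X₀ ⊆ Z then m else 0) := by
    intro m Z
    by_cases h : X₀ ∪ Y₀ ⊆ Z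
    · rw [if_pos h, if_pos (Finset.union_subset_iff.1 h).1]
    · rw [if_neg h]
      exact Nat.zero_le _
  have hXY1 : (if X₀ ∪ Y₀ ⊆ X₀ then a else 0) = 0 := by
    apply if_neg
    intro h
    exact hY (Finset.union_subset_iff.1 h).2
  have hv1 : a + cntD D (X₀ ∪ Y₀) ≤ cntD D X₀ := by
    rw [hcnt, hcnt, hXY1, if_pos (Finset.Subset.refl X₀)]
    have h2 : (∑ j ∈ A 0, if X₀ ∪ Y₀ ⊆ W j then b else 0)
        ≤ ∑ j ∈ A 0, (if X₀ ⊆ W j then b else 0) :=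
      Finset.sum_le_sum (fun j _ => hite b (W j))
    have h3 : (∑ d ∈ Finset.Icc 1 K, if X₀ ∪ Y₀ ⊆ T d then c d else 0)
        ≤ ∑ d ∈ Finset.Icc 1 K, (if X₀ ⊆ T d then c d else 0) :=
      Finset.sum_le_sum (fun d _ => hite (c d) (T d))
    omega
  have hv2 : cntD D (X₀ ∪ Y₀) ≤ F * s 1 := by
    rw [hcnt, hXY1]
    have h2 : ∀ j ∈ A 0, (if X₀ ∪ Y₀ ⊆ W j then b else 0) = 0 := by
      intro j hj
      apply if_neg
      intro h
      exact hno j ⟨(hA0 j).1 hj, h⟩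
    have h3 := hub3 (X₀ ∪ Y₀)
    rw [Finset.sum_eq_zero h2]
    omega
  rcases hent D (fun i _ => hprem i) with h | h
  · omega
  · have c1 : ((a:ℝ) + (cntD D (X₀ ∪ Y₀) : ℝ)) ≤ (cntD D X₀ : ℝ) := by exact_mod_cast hv1
    have c2 : (cntD D (X₀ ∪ Y₀) : ℝ) ≤ (F:ℝ) * (s 1:ℝ) := by exact_mod_cast hv2
    have c3 : γ * ((a:ℝ) + (cntD D (X₀ ∪ Y₀) : ℝ)) ≤ γ * (cntD D X₀ : ℝ) :=
      mul_le_mul_of_nonneg_left c1 hγ0.le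
    have c4 : (1-γ) * (cntD D (X₀ ∪ Y₀) : ℝ) ≤ (1-γ) * ((F:ℝ) * (s 1:ℝ)) :=
      mul_le_mul_of_nonneg_left c2 (by linarith)
    linarith


theorem stmt11 {n k : ℕ} (γ : ℝ) (hγ0 : 0 < γ) (hγ1 : γ < 1) (hk : 1 ≤ k)
    (P : Fin k → Finset (Fin n) × Finset (Fin n)) (X₀ Y₀ : Finset (Fin n))
    (hγk : γ < 1 / (k : ℝ)) :
    (entailsFrom γ P Finset.univ X₀ Y₀ ↔
      ∃ i : Fin k, entailsFrom γ P {i} X₀ Y₀) ∧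
    (entailsFrom γ P Finset.univ X₀ Y₀ ↔
      (Y₀ ⊆ X₀ ∨ ∃ i : Fin k, (P i).1 ⊆ X₀ ∧ X₀ ∪ Y₀ ⊆ (P i).1 ∪ (P i).2)) := by
  have hkR : (0:ℝ) < (k:ℝ) := by exact_mod_cast hk
  have hγk' : γ * k < 1 := by
    have := (lt_div_iff₀ hkR).1 hγk
    linarith
  have h32 : (Y₀ ⊆ X₀ ∨ ∃ i, (P i).1 ⊆ X₀ ∧ X₀ ∪ Y₀ ⊆ (P i).1 ∪ (P i).2) →
      ∃ i : Fin k, entailsFrom γ P {i} X₀ Y₀ := by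
    rintro (h | ⟨i, h1, h2⟩)
    · exact ⟨⟨0, hk⟩, fun D _ => satPI_of_subset hγ1.le D h⟩
    · exact ⟨i, fun D hD => satPI_single hγ0 D h1 h2 (hD i (Finset.mem_singleton_self i))⟩
  have h21 : (∃ i : Fin k, entailsFrom γ P {i} X₀ Y₀) → entailsFrom γ P Finset.univ X₀ Y₀ := by
    rintro ⟨i, hi⟩ D hD
    exact hi D (fun j _ => hD j (Finset.mem_univ j))
  have h13 : entailsFrom γ P Finset.univ X₀ Y₀ →
      (Y₀ ⊆ X₀ ∨ ∃ i, (P i).1 ⊆ X₀ ∧ X₀ ∪ Y₀ ⊆ (P i).1 ∪ (P i).2) := by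
    intro h
    by_contra hc
    rw [not_or] at hc
    exact construction γ hγ0 hγ1 hk P X₀ Y₀ hγk' hc.1 (fun i hi => hc.2 ⟨i, hi⟩) h
  exact ⟨⟨fun h => h32 (h13 h), h21⟩, ⟨h13, fun h => h21 (h32 h)⟩⟩
end
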